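/- arXiv:1012.0974 — 6 statements merged into one kernel-verified Lean document; each statement's English description precedes it below -/
import Mathlib

section
/- Let Δx > 0, Δt > 0, m₀ ∈ ℤ, and let a, b : ℕ → ℤ → ℝ be grid coefficients with |a(n,j)| ≤ A and |b(n,j)| ≤ B for all n ∈ ℕ, j ∈ ℤ, and suppose the CFL condition A·Δt/Δx ≤ 1 holds. If U : ℕ → ℤ → ℝ satisfies the Lax-Friedrichs delay scheme and M ≥ 0 is such that |U(n,j)| ≤ M for all j ∈ ℤ, then |U(n+1,j)| ≤ (1 + B·Δt)·M for all j ∈ ℤ. (One-step maximum-norm stability of the Lax-Friedrichs approximation.) -/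
/-- One-step maximum-norm stability of the Lax-Friedrichs approximation of the
first-order hyperbolic PDE with point-wise delay. -/
theorem laxFriedrichs_delay_one_step_stability
    (Δx Δt A B : ℝ) (hΔx : 0 < Δx) (hΔt : 0 < Δt) (m₀ : ℤ)
    (a b : ℕ → ℤ → ℝ)
    (ha : ∀ n j, |a n j| ≤ A) (hb : ∀ n j, |b n j| ≤ B)
    (hCFL : A * Δt / Δx ≤ 1)
    (U : ℕ → ℤ → ℝ)
    (hU : ∀ n j, U (n + 1) j =
      (1 / 2) * (U n (j + 1) + U n (j - 1))
        - (a n j * Δt / (2 * Δx)) * (U n (j + 1) - U n (j - 1))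
        + Δt * b n j * U n (j - m₀))
    (n : ℕ) (M : ℝ) (hM : 0 ≤ M) (hMb : ∀ j, |U n j| ≤ M) :
    ∀ j, |U (n + 1) j| ≤ (1 + B * Δt) * M := by
  intro j
  set c := a n j * Δt / (2 * Δx) with hc
  have habs : |c| ≤ 1 / 2 := by
    have h1 : |a n j| * Δt / Δx ≤ A * Δt / Δx := by
      gcongr
      exact ha n j
    have : |c| = |a n j| * Δt / (2 * Δx) := by
      rw [hc, abs_div, abs_mul, abs_of_pos hΔt, abs_of_pos (by positivity : (0:ℝ) < 2 * Δx)]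
    rw [this]
    have h2 : |a n j| * Δt / Δx ≤ 1 := le_trans h1 hCFL
    have h3 : |a n j| * Δt ≤ Δx := (div_le_one hΔx).mp h2
    rw [div_le_div_iff₀ (by positivity) (by norm_num)]
    linarith
  have h1 : -(1/2 : ℝ) ≤ c := by linarith [abs_le.mp habs |>.1]
  have h2 : c ≤ (1/2 : ℝ) := (abs_le.mp habs).2
  have key : U (n+1) j = (1/2 - c) * U n (j+1) + (1/2 + c) * U n (j-1) + Δt * b n j * U n (j - m₀) := by
    rw [hU n j]; ring
  rw [key]
  have hBt : |b n j| * Δt ≤ B * Δt := by gcongr; exact hb n j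
  calc |(1/2 - c) * U n (j+1) + (1/2 + c) * U n (j-1) + Δt * b n j * U n (j - m₀)|
      ≤ |(1/2 - c) * U n (j+1) + (1/2 + c) * U n (j-1)| + |Δt * b n j * U n (j - m₀)| := abs_add_le _ _
    _ ≤ (|(1/2 - c) * U n (j+1)| + |(1/2 + c) * U n (j-1)|) + |Δt * b n j * U n (j - m₀)| := by
        gcongr; exact abs_add_le _ _
    _ ≤ ((1/2 - c) * M + (1/2 + c) * M) + Δt * B * M := by
        gcongr
        · rw [abs_mul, abs_of_nonneg (by linarith)]
          gcongr
          exact hMb _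
        · rw [abs_mul, abs_of_nonneg (by linarith)]
          gcongr; · linarith
          exact hMb _
        · rw [abs_mul, abs_mul, abs_of_pos hΔt]
          have hbB : 0 ≤ B := le_trans (abs_nonneg _) (hb n j)
          have : |b n j| * |U n (j - m₀)| ≤ B * M :=
            mul_le_mul (hb n j) (hMb _) (abs_nonneg _) hbB
          nlinarith [hΔt.le]
    _ = (1 + B * Δt) * M := by ring
end

section
/- Let Δx > 0, Δt > 0, m₀ ∈ ℤ, and let a, b : ℕ → ℤ → ℝ be grid coefficients with |a(n,j)| ≤ A and |b(n,j)| ≤ B for all n ∈ ℕ, j ∈ ℤ, and suppose the CFL condition A·Δt/Δx ≤ 1 holds. If U : ℕ → ℤ → ℝ satisfies the Lax-Friedrichs delay scheme and M ≥ 0 is such that |U(0,j)| ≤ M for all j ∈ ℤ, then for every n ∈ ℕ and every j ∈ ℤ one has |U(n,j)| ≤ (1 + B·Δt)^n·M ≤ exp(B·n·Δt)·M. In particular, on any finite time interval [0, t_f] (i.e. for n·Δt ≤ t_f), |U(n,j)| ≤ exp(B·t_f)·M, so the scheme is stable in the maximum norm with stability constant of the form 1 + O(Δt) per step. -/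
/-- Maximum-norm stability on a finite time interval of the Lax-Friedrichs
approximation of the hyperbolic PDE with point-wise delay:
`|U n j| ≤ (1 + BΔt)^n M ≤ exp(B n Δt) M ≤ exp(B t_f) M` whenever `n Δt ≤ t_f`. -/
theorem laxFriedrichs_delay_stability
    (Δx Δt A B : ℝ) (hΔx : 0 < Δx) (hΔt : 0 < Δt) (m₀ : ℤ)
    (a b : ℕ → ℤ → ℝ)
    (ha : ∀ n j, |a n j| ≤ A) (hb : ∀ n j, |b n j| ≤ B)
    (hCFL : A * Δt / Δx ≤ 1)
    (U : ℕ → ℤ → ℝ)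
    (hU : ∀ n j, U (n + 1) j =
      (1 / 2) * (U n (j + 1) + U n (j - 1))
        - (a n j * Δt / (2 * Δx)) * (U n (j + 1) - U n (j - 1))
        + Δt * b n j * U n (j - m₀))
    (M : ℝ) (hM : 0 ≤ M) (hM0 : ∀ j, |U 0 j| ≤ M) :
    ∀ (n : ℕ) (j : ℤ),
      |U n j| ≤ (1 + B * Δt) ^ n * M ∧
      (1 + B * Δt) ^ n * M ≤ Real.exp (B * n * Δt) * M ∧
      ∀ t_f : ℝ, n * Δt ≤ t_f → |U n j| ≤ Real.exp (B * t_f) * M := by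
  have hB : 0 ≤ B := le_trans (abs_nonneg _) (hb 0 0)
  have hA : 0 ≤ A := le_trans (abs_nonneg _) (ha 0 0)
  have hAx : A * Δt ≤ Δx := by
    have := (div_le_one hΔx).mp hCFL
    linarith
  have hkey : ∀ n j, |U n j| ≤ (1 + B * Δt) ^ n * M := by
    intro n
    induction n with
    | zero => simpa using hM0
    | succ n ih =>
      intro j
      set c := a n j * Δt / (2 * Δx) with hc
      have hcb : |c| ≤ 1 / 2 := by
        rw [hc, abs_div, abs_mul, abs_of_pos (by positivity : (0:ℝ) < 2 * Δx),
          abs_of_pos hΔt, div_le_iff₀ (by positivity)]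
        have h1 : |a n j| * Δt ≤ A * Δt := by
          exact mul_le_mul_of_nonneg_right (ha n j) hΔt.le
        linarith
      have hc1 : -(1/2 : ℝ) ≤ c := by
        have := neg_abs_le c; linarith [hcb, abs_le.mp hcb |>.1]
      have hc2 : c ≤ (1/2 : ℝ) := (abs_le.mp hcb).2
      have heq : U (n + 1) j =
          (1/2 - c) * U n (j + 1) + (1/2 + c) * U n (j - 1)
            + Δt * b n j * U n (j - m₀) := by
        rw [hU n j]; ring
      have hP : (0:ℝ) ≤ (1 + B * Δt) ^ n * M := by positivity
      have h1 := ih (j + 1)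
      have h2 := ih (j - 1)
      have h3 := ih (j - m₀)
      have hbd : |U (n+1) j| ≤ (1/2 - c) * ((1 + B * Δt) ^ n * M)
          + (1/2 + c) * ((1 + B * Δt) ^ n * M)
          + Δt * B * ((1 + B * Δt) ^ n * M) := by
        rw [heq]
        calc |(1/2 - c) * U n (j + 1) + (1/2 + c) * U n (j - 1)
              + Δt * b n j * U n (j - m₀)|
            ≤ |(1/2 - c) * U n (j + 1)| + |(1/2 + c) * U n (j - 1)|
              + |Δt * b n j * U n (j - m₀)| := by
              exact (abs_add_le _ _).trans (by gcongr; exact abs_add_le _ _)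
          _ ≤ (1/2 - c) * ((1 + B * Δt) ^ n * M)
              + (1/2 + c) * ((1 + B * Δt) ^ n * M)
              + Δt * B * ((1 + B * Δt) ^ n * M) := by
              gcongr ?_ + ?_ + ?_
              · rw [abs_mul, abs_of_nonneg (by linarith : (0:ℝ) ≤ 1/2 - c)]
                exact mul_le_mul_of_nonneg_left h1 (by linarith)
              · rw [abs_mul, abs_of_nonneg (by linarith : (0:ℝ) ≤ 1/2 + c)]
                exact mul_le_mul_of_nonneg_left h2 (by linarith)
              · rw [abs_mul, abs_mul, abs_of_pos hΔt]
                have : |b n j| * |U n (j - m₀)| ≤ B * ((1 + B * Δt) ^ n * M) :=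
                  mul_le_mul (hb n j) h3 (abs_nonneg _)
                    (le_trans (abs_nonneg _) (hb n j))
                calc Δt * |b n j| * |U n (j - m₀)|
                    = Δt * (|b n j| * |U n (j - m₀)|) := by ring
                  _ ≤ Δt * (B * ((1 + B * Δt) ^ n * M)) :=
                      mul_le_mul_of_nonneg_left this hΔt.le
                  _ = Δt * B * ((1 + B * Δt) ^ n * M) := by ring
      calc |U (n+1) j| ≤ _ := hbd
        _ = (1 + B * Δt) ^ (n+1) * M := by ring
  intro n j
  have hpow : (1 + B * Δt) ^ n * M ≤ Real.exp (B * n * Δt) * M := by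
    have h1 : (1 + B * Δt) ^ n ≤ Real.exp (B * Δt) ^ n := by
      apply pow_le_pow_left₀ (by positivity)
      linarith [Real.add_one_le_exp (B * Δt)]
    have h2 : Real.exp (B * Δt) ^ n = Real.exp (B * n * Δt) := by
      rw [← Real.exp_nat_mul]; ring_nf
    exact mul_le_mul_of_nonneg_right (h2 ▸ h1) hM
  refine ⟨hkey n j, hpow, fun t_f ht => ?_⟩
  have : Real.exp (B * n * Δt) ≤ Real.exp (B * t_f) := by
    apply Real.exp_le_exp.mpr
    calc B * n * Δt = B * (n * Δt) := by ring
      _ ≤ B * t_f := mul_le_mul_of_nonneg_left ht hB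
  exact le_trans (hkey n j) (le_trans hpow (mul_le_mul_of_nonneg_right this hM))
end

section
/- Let Δx > 0, Δt > 0, m₀ ∈ ℤ, and let a, b : ℕ → ℤ → ℝ be grid coefficients with |a(n,j)| ≤ A and |b(n,j)| ≤ B for all n, j, and suppose the CFL condition A·Δt/Δx ≤ 1 holds. Suppose e : ℕ → ℤ → ℝ and T : ℕ → ℤ → ℝ satisfy, for all n ∈ ℕ and j ∈ ℤ, the error equation e(n+1,j) = (1/2)·(1 − a(n,j)·Δt/Δx)·e(n,j+1) + (1/2)·(1 + a(n,j)·Δt/Δx)·e(n,j−1) + Δt·b(n,j)·e(n,j−m₀) − Δt·T(n,j). If M ≥ 0 and S ≥ 0 are such that |e(n,j)| ≤ M and |T(n,j)| ≤ S for all j ∈ ℤ, then |e(n+1,j)| ≤ (1 + B·Δt)·M + Δt·S for all j ∈ ℤ. (One-step growth bound for the error of the Lax-Friedrichs approximation.) -/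
/-- One-step growth bound for the error of the Lax-Friedrichs approximation of
the hyperbolic PDE with point-wise delay. -/
theorem laxFriedrichs_delay_error_one_step
    (Δx Δt A B : ℝ) (hΔx : 0 < Δx) (hΔt : 0 < Δt) (m₀ : ℤ)
    (a b : ℕ → ℤ → ℝ)
    (ha : ∀ n j, |a n j| ≤ A) (hb : ∀ n j, |b n j| ≤ B)
    (hCFL : A * Δt / Δx ≤ 1)
    (e T : ℕ → ℤ → ℝ)
    (herr : ∀ n j, e (n + 1) j =
      (1 / 2) * (1 - a n j * Δt / Δx) * e n (j + 1)
        + (1 / 2) * (1 + a n j * Δt / Δx) * e n (j - 1)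
        + Δt * b n j * e n (j - m₀) - Δt * T n j)
    (n : ℕ) (M S : ℝ) (hM : 0 ≤ M) (hS : 0 ≤ S)
    (hMe : ∀ j, |e n j| ≤ M) (hST : ∀ j, |T n j| ≤ S) :
    ∀ j, |e (n + 1) j| ≤ (1 + B * Δt) * M + Δt * S := by
  intro j
  set L := a n j * Δt / Δx with hLdef
  have hAa : |a n j| ≤ A := ha n j
  have hL : |L| ≤ 1 := by
    have h1 : |L| = |a n j| * Δt / Δx := by
      rw [hLdef, abs_div, abs_mul, abs_of_pos hΔt, abs_of_pos hΔx]
    rw [h1]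
    calc |a n j| * Δt / Δx ≤ A * Δt / Δx := by
          gcongr
      _ ≤ 1 := hCFL
  have hL1 : -1 ≤ L := neg_le_of_abs_le hL
  have hL2 : L ≤ 1 := le_of_abs_le hL
  have hB : |b n j| ≤ B := hb n j
  rw [herr n j]
  have h1 : |(1 / 2) * (1 - L) * e n (j + 1)| ≤ (1 / 2) * (1 - L) * M := by
    rw [abs_mul, abs_of_nonneg (by linarith : (0:ℝ) ≤ 1 / 2 * (1 - L))]
    exact mul_le_mul_of_nonneg_left (hMe _) (by linarith)
  have h2 : |(1 / 2) * (1 + L) * e n (j - 1)| ≤ (1 / 2) * (1 + L) * M := by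
    rw [abs_mul, abs_of_nonneg (by linarith : (0:ℝ) ≤ 1 / 2 * (1 + L))]
    exact mul_le_mul_of_nonneg_left (hMe _) (by linarith)
  have h3 : |Δt * b n j * e n (j - m₀)| ≤ Δt * B * M := by
    rw [abs_mul, abs_mul, abs_of_pos hΔt]
    have hBnn : (0:ℝ) ≤ B := le_trans (abs_nonneg _) hB
    exact mul_le_mul (mul_le_mul_of_nonneg_left hB hΔt.le) (hMe _)
      (abs_nonneg _) (by positivity)
  have h4 : |Δt * T n j| ≤ Δt * S := by
    rw [abs_mul, abs_of_pos hΔt]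
    exact mul_le_mul_of_nonneg_left (hST _) hΔt.le
  calc |(1 / 2) * (1 - L) * e n (j + 1) + (1 / 2) * (1 + L) * e n (j - 1)
        + Δt * b n j * e n (j - m₀) - Δt * T n j|
      ≤ |(1 / 2) * (1 - L) * e n (j + 1)| + |(1 / 2) * (1 + L) * e n (j - 1)|
        + |Δt * b n j * e n (j - m₀)| + |Δt * T n j| := by
        apply (abs_sub _ _).trans
        gcongr
        exact (abs_add_le _ _).trans (by gcongr; exact abs_add_le _ _)
    _ ≤ (1 / 2) * (1 - L) * M + (1 / 2) * (1 + L) * M + Δt * B * M + Δt * S := by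
        gcongr
    _ = (1 + B * Δt) * M + Δt * S := by ring
end

section
/- Let Δx > 0, Δt > 0, m₀ ∈ ℤ, let a, b : ℕ → ℤ → ℝ be grid coefficients with |a(n,j)| ≤ A and |b(n,j)| ≤ B for all n, j, and suppose the CFL condition A·Δt/Δx ≤ 1 holds. Let u : ℝ → ℝ → ℝ and let U : ℕ → ℤ → ℝ satisfy the Lax-Friedrichs delay scheme with exact initial data U(0,j) = u(j·Δx, 0) for all j ∈ ℤ. Define the truncation error T(n,j) := [u(j·Δx, (n+1)·Δt) − (u((j+1)·Δx, n·Δt) + u((j−1)·Δx, n·Δt))/2]/Δt + a(n,j)·(u((j+1)·Δx, n·Δt) − u((j−1)·Δx, n·Δt))/(2Δx) − b(n,j)·u((j−m₀)·Δx, n·Δt), and assume |T(n,j)| ≤ T_max for all n, j. Then for every n ∈ ℕ and j ∈ ℤ, |U(n,j) − u(j·Δx, n·Δt)| ≤ n·Δt·T_max·(1 + B·Δt)^n ≤ n·Δt·T_max·exp(B·n·Δt). (Convergence of the Lax-Friedrichs approximation on any finite time interval.) -/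
set_option maxHeartbeats 1000000 in
/-- Convergence of the Lax-Friedrichs approximation of the hyperbolic PDE with
point-wise delay on any finite time interval:
`|U(n,j) − u(x_j, t_n)| ≤ n Δt T_max (1 + BΔt)^n ≤ n Δt T_max exp(B n Δt)`. -/
theorem laxFriedrichs_delay_convergence
    (Δx Δt A B : ℝ) (hΔx : 0 < Δx) (hΔt : 0 < Δt) (m₀ : ℤ)
    (a b : ℕ → ℤ → ℝ)
    (ha : ∀ n j, |a n j| ≤ A) (hb : ∀ n j, |b n j| ≤ B)
    (hCFL : A * Δt / Δx ≤ 1)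
    (u : ℝ → ℝ → ℝ) (U : ℕ → ℤ → ℝ)
    (hU : ∀ n j, U (n + 1) j =
      (1 / 2) * (U n (j + 1) + U n (j - 1))
        - (a n j * Δt / (2 * Δx)) * (U n (j + 1) - U n (j - 1))
        + Δt * b n j * U n (j - m₀))
    (hU0 : ∀ j : ℤ, U 0 j = u (j * Δx) 0)
    (T : ℕ → ℤ → ℝ)
    (hT : ∀ (n : ℕ) (j : ℤ), T n j =
      (u (j * Δx) ((n + 1) * Δt)
          - (u ((j + 1 : ℤ) * Δx) (n * Δt) + u ((j - 1 : ℤ) * Δx) (n * Δt)) / 2) / Δt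
        + a n j * (u ((j + 1 : ℤ) * Δx) (n * Δt) - u ((j - 1 : ℤ) * Δx) (n * Δt))
            / (2 * Δx)
        - b n j * u ((j - m₀ : ℤ) * Δx) (n * Δt))
    (T_max : ℝ) (hTmax : ∀ n j, |T n j| ≤ T_max) :
    ∀ (n : ℕ) (j : ℤ),
      |U n j - u (j * Δx) (n * Δt)| ≤ n * Δt * T_max * (1 + B * Δt) ^ n ∧
      (n : ℝ) * Δt * T_max * (1 + B * Δt) ^ n
        ≤ n * Δt * T_max * Real.exp (B * n * Δt) := by
  have hB : 0 ≤ B := le_trans (abs_nonneg _) (hb 0 0)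
  have hTm : 0 ≤ T_max := le_trans (abs_nonneg _) (hTmax 0 0)
  have key : ∀ n : ℕ, ∀ j : ℤ,
      |U n j - u (j * Δx) (n * Δt)| ≤ n * Δt * T_max * (1 + B * Δt) ^ n := by
    intro n
    induction n with
    | zero => intro j; simp [hU0]
    | succ n ih =>
      intro j
      have hc : |a n j * Δt / (2 * Δx)| ≤ 1 / 2 := by
        rw [abs_div, abs_mul, abs_of_pos hΔt,
          abs_of_pos (by positivity : (0:ℝ) < 2 * Δx),
          div_le_iff₀ (by positivity)]
        have h1 : |a n j| * Δt ≤ A * Δt :=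
          mul_le_mul_of_nonneg_right (ha n j) hΔt.le
        have h2 : A * Δt ≤ Δx := by
          have := mul_le_mul_of_nonneg_right hCFL hΔx.le
          rwa [div_mul_cancel₀ _ hΔx.ne', one_mul] at this
        linarith
      set c := a n j * Δt / (2 * Δx) with hcdef
      have hc1 : -(1/2) ≤ c := (abs_le.1 hc).1
      have hc2 : c ≤ 1/2 := (abs_le.1 hc).2
      have hid : U (n+1) j - u (j * Δx) ((n+1 : ℕ) * Δt) =
          (1/2 - c) * (U n (j+1) - u ((j+1 : ℤ) * Δx) (n * Δt))
          + (1/2 + c) * (U n (j-1) - u ((j-1 : ℤ) * Δx) (n * Δt))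
          + Δt * b n j * (U n (j - m₀) - u ((j - m₀ : ℤ) * Δx) (n * Δt))
          - Δt * T n j := by
        rw [hU, hT, hcdef]
        push_cast
        field_simp
        ring
      set E := (n : ℝ) * Δt * T_max * (1 + B * Δt) ^ n with hE
      have hEnn : 0 ≤ E := by positivity
      have e1 := ih (j+1); have e2 := ih (j-1); have e3 := ih (j - m₀)
      have b1 : |(1/2 - c) * (U n (j+1) - u ((j+1 : ℤ) * Δx) (n * Δt))|
          ≤ (1/2 - c) * E := by
        rw [abs_mul, abs_of_nonneg (by linarith : (0:ℝ) ≤ 1/2 - c)]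
        exact mul_le_mul_of_nonneg_left e1 (by linarith)
      have b2 : |(1/2 + c) * (U n (j-1) - u ((j-1 : ℤ) * Δx) (n * Δt))|
          ≤ (1/2 + c) * E := by
        rw [abs_mul, abs_of_nonneg (by linarith : (0:ℝ) ≤ 1/2 + c)]
        exact mul_le_mul_of_nonneg_left e2 (by linarith)
      have b3 : |Δt * b n j * (U n (j - m₀) - u ((j - m₀ : ℤ) * Δx) (n * Δt))|
          ≤ Δt * B * E := by
        rw [abs_mul, abs_mul, abs_of_pos hΔt]
        exact mul_le_mul (mul_le_mul_of_nonneg_left (hb n j) hΔt.le) e3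
          (abs_nonneg _) (by positivity)
      have b4 : |Δt * T n j| ≤ Δt * T_max := by
        rw [abs_mul, abs_of_pos hΔt]
        exact mul_le_mul_of_nonneg_left (hTmax n j) hΔt.le
      have hP : (1:ℝ) ≤ (1 + B * Δt) ^ n := one_le_pow₀ (by nlinarith)
      have hfinal : (1/2 - c) * E + (1/2 + c) * E + Δt * B * E + Δt * T_max
          ≤ (↑(n+1) : ℝ) * Δt * T_max * (1 + B * Δt) ^ (n+1) := by
        push_cast
        rw [pow_succ]
        have hone : (1:ℝ) ≤ 1 + B * Δt := by nlinarith
        have hQ : (1:ℝ) ≤ (1 + B * Δt) ^ n * (1 + B * Δt) := by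
          have h := mul_le_mul hP hone zero_le_one (le_trans zero_le_one hP)
          simpa using h
        have hTT := mul_le_mul_of_nonneg_left hQ (mul_nonneg hΔt.le hTm)
        rw [mul_one] at hTT
        have h1 : (1/2 - c) * E + (1/2 + c) * E + Δt * B * E + Δt * T_max
            = (1 + B * Δt) * E + Δt * T_max := by ring
        rw [h1, hE]
        linarith [hTT]
      rw [hid]
      refine le_trans ?_ hfinal
      obtain ⟨t1, t1'⟩ := abs_le.1 b1
      obtain ⟨t2, t2'⟩ := abs_le.1 b2
      obtain ⟨t3, t3'⟩ := abs_le.1 b3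
      obtain ⟨t4, t4'⟩ := abs_le.1 b4
      rw [abs_le]
      constructor
      · linarith
      · linarith
  intro n j
  refine ⟨key n j, ?_⟩
  have hexp : (1 + B * Δt) ^ n ≤ Real.exp (B * n * Δt) := by
    have h1 : 1 + B * Δt ≤ Real.exp (B * Δt) := by
      have := Real.add_one_le_exp (B * Δt); linarith
    calc (1 + B * Δt) ^ n ≤ (Real.exp (B * Δt)) ^ n :=
          pow_le_pow_left₀ (by linarith [mul_nonneg hB hΔt.le]) h1 n
      _ = Real.exp (B * n * Δt) := by
          rw [← Real.exp_nat_mul]; congr 1; ring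
  have : 0 ≤ (n : ℝ) * Δt * T_max := by positivity
  exact mul_le_mul_of_nonneg_left hexp this
end

section
/- Let Δx > 0, Δy > 0, Δt > 0, m₀, q₀ ∈ ℤ, and let a, b, c : ℕ → ℤ → ℤ → ℝ be grid coefficients with |a(n,i,j)| ≤ A, |b(n,i,j)| ≤ B, |c(n,i,j)| ≤ C for all n, i, j. Suppose the CFL-type conditions A·Δt/Δx ≤ 1/2 and B·Δt/Δy ≤ 1/2 hold (so that in particular A·Δt/Δx + B·Δt/Δy ≤ 1). If U : ℕ → ℤ → ℤ → ℝ satisfies the two-dimensional Lax-Friedrichs delay scheme and M ≥ 0 is such that |U(n,i,j)| ≤ M for all i, j ∈ ℤ, then |U(n+1,i,j)| ≤ (1 + C·Δt)·M for all i, j ∈ ℤ. (One-step maximum-norm stability of the two-dimensional Lax-Friedrichs approximation.) -/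
/-- One-step maximum-norm stability of the two-dimensional Lax-Friedrichs
approximation of `u_t + a u_x + b u_y = c u(x−α, y−β, t)`. -/
theorem laxFriedrichs2D_delay_one_step_stability
    (Δx Δy Δt A B C : ℝ) (hΔx : 0 < Δx) (hΔy : 0 < Δy) (hΔt : 0 < Δt)
    (m₀ q₀ : ℤ)
    (a b c : ℕ → ℤ → ℤ → ℝ)
    (ha : ∀ n i j, |a n i j| ≤ A) (hb : ∀ n i j, |b n i j| ≤ B)
    (hc : ∀ n i j, |c n i j| ≤ C)
    (hCFLx : A * Δt / Δx ≤ 1 / 2) (hCFLy : B * Δt / Δy ≤ 1 / 2)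
    (U : ℕ → ℤ → ℤ → ℝ)
    (hU : ∀ n i j, U (n + 1) i j =
      (1 / 4) * (U n (i + 1) j + U n (i - 1) j + U n i (j + 1) + U n i (j - 1))
        - (Δt / (2 * Δx)) * a n i j * (U n (i + 1) j - U n (i - 1) j)
        - (Δt / (2 * Δy)) * b n i j * (U n i (j + 1) - U n i (j - 1))
        + Δt * c n i j * U n (i - m₀) (j - q₀))
    (n : ℕ) (M : ℝ) (hM : 0 ≤ M) (hMb : ∀ i j, |U n i j| ≤ M) :
    ∀ i j, |U (n + 1) i j| ≤ (1 + C * Δt) * M := by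
  intro i j
  set p := Δt / (2 * Δx) * a n i j with hp
  set q := Δt / (2 * Δy) * b n i j with hq
  have hpabs : |p| ≤ 1 / 4 := by
    have h1 : |p| = Δt / (2 * Δx) * |a n i j| := by
      rw [hp, abs_mul, abs_of_nonneg (by positivity : (0:ℝ) ≤ Δt / (2 * Δx))]
    have h2 : Δt / (2 * Δx) * |a n i j| ≤ Δt / (2 * Δx) * A :=
      mul_le_mul_of_nonneg_left (ha n i j) (by positivity)
    have h3 : Δt / (2 * Δx) * A ≤ 1 / 4 := by
      have := hCFLx
      rw [div_le_iff₀ hΔx] at this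
      rw [div_mul_eq_mul_div, div_le_iff₀ (by positivity : (0:ℝ) < 2 * Δx)]
      nlinarith
    linarith [h1 ▸ le_trans h2 h3]
  have hqabs : |q| ≤ 1 / 4 := by
    have h1 : |q| = Δt / (2 * Δy) * |b n i j| := by
      rw [hq, abs_mul, abs_of_nonneg (by positivity : (0:ℝ) ≤ Δt / (2 * Δy))]
    have h2 : Δt / (2 * Δy) * |b n i j| ≤ Δt / (2 * Δy) * B :=
      mul_le_mul_of_nonneg_left (hb n i j) (by positivity)
    have h3 : Δt / (2 * Δy) * B ≤ 1 / 4 := by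
      have := hCFLy
      rw [div_le_iff₀ hΔy] at this
      rw [div_mul_eq_mul_div, div_le_iff₀ (by positivity : (0:ℝ) < 2 * Δy)]
      nlinarith
    linarith [h1 ▸ le_trans h2 h3]
  have hp1 := abs_le.mp hpabs
  have hq1 := abs_le.mp hqabs
  have key : U (n + 1) i j =
      (1 / 4 - p) * U n (i + 1) j + (1 / 4 + p) * U n (i - 1) j
      + (1 / 4 - q) * U n i (j + 1) + (1 / 4 + q) * U n i (j - 1)
      + Δt * c n i j * U n (i - m₀) (j - q₀) := by
    rw [hU]; ring
  rw [key]
  have b1 : |(1 / 4 - p) * U n (i + 1) j| ≤ (1 / 4 - p) * M := by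
    rw [abs_mul, abs_of_nonneg (by linarith : (0:ℝ) ≤ 1 / 4 - p)]
    exact mul_le_mul_of_nonneg_left (hMb _ _) (by linarith)
  have b2 : |(1 / 4 + p) * U n (i - 1) j| ≤ (1 / 4 + p) * M := by
    rw [abs_mul, abs_of_nonneg (by linarith : (0:ℝ) ≤ 1 / 4 + p)]
    exact mul_le_mul_of_nonneg_left (hMb _ _) (by linarith)
  have b3 : |(1 / 4 - q) * U n i (j + 1)| ≤ (1 / 4 - q) * M := by
    rw [abs_mul, abs_of_nonneg (by linarith : (0:ℝ) ≤ 1 / 4 - q)]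
    exact mul_le_mul_of_nonneg_left (hMb _ _) (by linarith)
  have b4 : |(1 / 4 + q) * U n i (j - 1)| ≤ (1 / 4 + q) * M := by
    rw [abs_mul, abs_of_nonneg (by linarith : (0:ℝ) ≤ 1 / 4 + q)]
    exact mul_le_mul_of_nonneg_left (hMb _ _) (by linarith)
  have b5 : |Δt * c n i j * U n (i - m₀) (j - q₀)| ≤ Δt * C * M := by
    rw [abs_mul, abs_mul, abs_of_nonneg hΔt.le]
    have hC : |c n i j| ≤ C := hc n i j
    have := mul_le_mul (mul_le_mul_of_nonneg_left hC hΔt.le) (hMb (i - m₀) (j - q₀))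
      (abs_nonneg _) (by nlinarith [abs_nonneg (c n i j)])
    linarith
  calc |(1 / 4 - p) * U n (i + 1) j + (1 / 4 + p) * U n (i - 1) j
      + (1 / 4 - q) * U n i (j + 1) + (1 / 4 + q) * U n i (j - 1)
      + Δt * c n i j * U n (i - m₀) (j - q₀)|
      ≤ |(1 / 4 - p) * U n (i + 1) j| + |(1 / 4 + p) * U n (i - 1) j|
        + |(1 / 4 - q) * U n i (j + 1)| + |(1 / 4 + q) * U n i (j - 1)|
        + |Δt * c n i j * U n (i - m₀) (j - q₀)| := by
          apply (abs_add_le _ _).trans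
          gcongr
          apply (abs_add_le _ _).trans
          gcongr
          apply (abs_add_le _ _).trans
          gcongr
          exact abs_add_le _ _
    _ ≤ (1 / 4 - p) * M + (1 / 4 + p) * M + (1 / 4 - q) * M + (1 / 4 + q) * M
        + Δt * C * M := by linarith
    _ = (1 + C * Δt) * M := by ring
end

section
/- Let Δx > 0, Δy > 0, Δt > 0, m₀, q₀ ∈ ℤ, let a, b, c : ℕ → ℤ → ℤ → ℝ be grid coefficients with |a(n,i,j)| ≤ A, |b(n,i,j)| ≤ B, |c(n,i,j)| ≤ C for all n, i, j, and suppose the CFL-type conditions A·Δt/Δx ≤ 1/2 and B·Δt/Δy ≤ 1/2 hold. Let u : ℝ → ℝ → ℝ → ℝ (written u(x,y,t)) and let U : ℕ → ℤ → ℤ → ℝ satisfy the two-dimensional Lax-Friedrichs delay scheme with exact initial data U(0,i,j) = u(i·Δx, j·Δy, 0) for all i, j ∈ ℤ. Define the truncation error T(n,i,j) := [u(i·Δx, j·Δy, (n+1)Δt) − (u((i+1)Δx, j·Δy, nΔt) + u((i−1)Δx, j·Δy, nΔt) + u(i·Δx, (j+1)Δy, nΔt) + u(i·Δx, (j−1)Δy,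 nΔt))/4]/Δt + a(n,i,j)·(u((i+1)Δx, j·Δy, nΔt) − u((i−1)Δx, j·Δy, nΔt))/(2Δx) + b(n,i,j)·(u(i·Δx, (j+1)Δy, nΔt) − u(i·Δx, (j−1)Δy, nΔt))/(2Δy) − c(n,i,j)·u((i−m₀)Δx, (j−q₀)Δy, nΔt), and assume |T(n,i,j)| ≤ T_max for all n, i, j. Then for every n ∈ ℕ and all i, j ∈ ℤ, |U(n,i,j) − u(i·Δx, j·Δy, n·Δt)| ≤ n·Δt·T_max·(1 + C·Δt)^n ≤ n·Δt·T_max·exp(C·n·Δt). (Convergence of the two-dimensional Lax-Friedrichs approximation on any finite time interval.) -/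
set_option maxHeartbeats 2000000 in
/-- Convergence of the two-dimensional Lax-Friedrichs approximation of the
hyperbolic PDE with point-wise delay on any finite time interval. -/
theorem laxFriedrichs2D_delay_convergence
    (Δx Δy Δt A B C : ℝ) (hΔx : 0 < Δx) (hΔy : 0 < Δy) (hΔt : 0 < Δt)
    (m₀ q₀ : ℤ)
    (a b c : ℕ → ℤ → ℤ → ℝ)
    (ha : ∀ n i j, |a n i j| ≤ A) (hb : ∀ n i j, |b n i j| ≤ B)
    (hc : ∀ n i j, |c n i j| ≤ C)
    (hCFLx : A * Δt / Δx ≤ 1 / 2) (hCFLy : B * Δt / Δy ≤ 1 / 2)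
    (u : ℝ → ℝ → ℝ → ℝ) (U : ℕ → ℤ → ℤ → ℝ)
    (hU : ∀ n i j, U (n + 1) i j =
      (1 / 4) * (U n (i + 1) j + U n (i - 1) j + U n i (j + 1) + U n i (j - 1))
        - (Δt / (2 * Δx)) * a n i j * (U n (i + 1) j - U n (i - 1) j)
        - (Δt / (2 * Δy)) * b n i j * (U n i (j + 1) - U n i (j - 1))
        + Δt * c n i j * U n (i - m₀) (j - q₀))
    (hU0 : ∀ i j : ℤ, U 0 i j = u (i * Δx) (j * Δy) 0)
    (T : ℕ → ℤ → ℤ → ℝ)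
    (hT : ∀ (n : ℕ) (i j : ℤ), T n i j =
      (u (i * Δx) (j * Δy) ((n + 1) * Δt)
          - (u ((i + 1 : ℤ) * Δx) (j * Δy) (n * Δt)
              + u ((i - 1 : ℤ) * Δx) (j * Δy) (n * Δt)
              + u (i * Δx) ((j + 1 : ℤ) * Δy) (n * Δt)
              + u (i * Δx) ((j - 1 : ℤ) * Δy) (n * Δt)) / 4) / Δt
        + a n i j * (u ((i + 1 : ℤ) * Δx) (j * Δy) (n * Δt)
              - u ((i - 1 : ℤ) * Δx) (j * Δy) (n * Δt)) / (2 * Δx)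
        + b n i j * (u (i * Δx) ((j + 1 : ℤ) * Δy) (n * Δt)
              - u (i * Δx) ((j - 1 : ℤ) * Δy) (n * Δt)) / (2 * Δy)
        - c n i j * u ((i - m₀ : ℤ) * Δx) ((j - q₀ : ℤ) * Δy) (n * Δt))
    (T_max : ℝ) (hTmax : ∀ n i j, |T n i j| ≤ T_max) :
    ∀ (n : ℕ) (i j : ℤ),
      |U n i j - u (i * Δx) (j * Δy) (n * Δt)|
          ≤ n * Δt * T_max * (1 + C * Δt) ^ n ∧
      (n : ℝ) * Δt * T_max * (1 + C * Δt) ^ n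
          ≤ n * Δt * T_max * Real.exp (C * n * Δt) := by
  have hA : 0 ≤ A := le_trans (abs_nonneg _) (ha 0 0 0)
  have hB : 0 ≤ B := le_trans (abs_nonneg _) (hb 0 0 0)
  have hC : 0 ≤ C := le_trans (abs_nonneg _) (hc 0 0 0)
  have hTm : 0 ≤ T_max := le_trans (abs_nonneg _) (hTmax 0 0 0)
  have hbase : (0:ℝ) ≤ 1 + C * Δt := by nlinarith
  have key : ∀ (n : ℕ) (i j : ℤ),
      |U n i j - u (i * Δx) (j * Δy) (n * Δt)|
        ≤ n * Δt * T_max * (1 + C * Δt) ^ n := by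
    intro n
    induction n with
    | zero =>
      intro i j
      simp [hU0]
    | succ n IH =>
      intro i j
      set E : ℝ := n * Δt * T_max * (1 + C * Δt) ^ n with hEdef
      have hE : 0 ≤ E := by positivity
      -- error equation
      have heq : U (n + 1) i j - u (i * Δx) (j * Δy) ((n + 1 : ℕ) * Δt) =
          (1/4 - Δt / (2 * Δx) * a n i j) *
            (U n (i + 1) j - u ((i + 1 : ℤ) * Δx) (j * Δy) (n * Δt))
          + (1/4 + Δt / (2 * Δx) * a n i j) *
            (U n (i - 1) j - u ((i - 1 : ℤ) * Δx) (j * Δy) (n * Δt))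
          + (1/4 - Δt / (2 * Δy) * b n i j) *
            (U n i (j + 1) - u (i * Δx) ((j + 1 : ℤ) * Δy) (n * Δt))
          + (1/4 + Δt / (2 * Δy) * b n i j) *
            (U n i (j - 1) - u (i * Δx) ((j - 1 : ℤ) * Δy) (n * Δt))
          + Δt * c n i j *
            (U n (i - m₀) (j - q₀) - u ((i - m₀ : ℤ) * Δx) ((j - q₀ : ℤ) * Δy) (n * Δt))
          - Δt * T n i j := by
        rw [hU, hT]
        push_cast
        field_simp
        ring
      -- nonnegativity of coefficients
      have hax : |a n i j| * Δt / Δx ≤ 1 / 2 :=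
        le_trans (by gcongr; exact ha n i j) hCFLx
      have hbx : |b n i j| * Δt / Δy ≤ 1 / 2 :=
        le_trans (by gcongr; exact hb n i j) hCFLy
      have haa := abs_le.mp (le_refl |a n i j|)
      have hbb := abs_le.mp (le_refl |b n i j|)
      have hax' : |Δt / (2 * Δx) * a n i j| ≤ 1/4 := by
        rw [abs_mul, abs_of_nonneg (by positivity : (0:ℝ) ≤ Δt / (2 * Δx)),
          div_mul_eq_mul_div, div_le_iff₀ (by positivity : (0:ℝ) < 2 * Δx)]
        rw [div_le_iff₀ hΔx] at hax
        nlinarith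
      have hbx' : |Δt / (2 * Δy) * b n i j| ≤ 1/4 := by
        rw [abs_mul, abs_of_nonneg (by positivity : (0:ℝ) ≤ Δt / (2 * Δy)),
          div_mul_eq_mul_div, div_le_iff₀ (by positivity : (0:ℝ) < 2 * Δy)]
        rw [div_le_iff₀ hΔy] at hbx
        nlinarith
      obtain ⟨hax1, hax2⟩ := abs_le.mp hax'
      obtain ⟨hbx1, hbx2⟩ := abs_le.mp hbx'
      have hc1 : 0 ≤ 1/4 - Δt / (2 * Δx) * a n i j := by linarith
      have hc2 : 0 ≤ 1/4 + Δt / (2 * Δx) * a n i j := by linarith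
      have hc3 : 0 ≤ 1/4 - Δt / (2 * Δy) * b n i j := by linarith
      have hc4 : 0 ≤ 1/4 + Δt / (2 * Δy) * b n i j := by linarith
      -- bound each term
      have b1 : |(1/4 - Δt / (2 * Δx) * a n i j) *
          (U n (i + 1) j - u ((i + 1 : ℤ) * Δx) (j * Δy) (n * Δt))| ≤
          (1/4 - Δt / (2 * Δx) * a n i j) * E := by
        rw [abs_mul, abs_of_nonneg hc1]
        exact mul_le_mul_of_nonneg_left (IH (i + 1) j) hc1
      have b2 : |(1/4 + Δt / (2 * Δx) * a n i j) *
          (U n (i - 1) j - u ((i - 1 : ℤ) * Δx) (j * Δy) (n * Δt))| ≤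
          (1/4 + Δt / (2 * Δx) * a n i j) * E := by
        rw [abs_mul, abs_of_nonneg hc2]
        exact mul_le_mul_of_nonneg_left (IH (i - 1) j) hc2
      have b3 : |(1/4 - Δt / (2 * Δy) * b n i j) *
          (U n i (j + 1) - u (i * Δx) ((j + 1 : ℤ) * Δy) (n * Δt))| ≤
          (1/4 - Δt / (2 * Δy) * b n i j) * E := by
        rw [abs_mul, abs_of_nonneg hc3]
        exact mul_le_mul_of_nonneg_left (IH i (j + 1)) hc3
      have b4 : |(1/4 + Δt / (2 * Δy) * b n i j) *
          (U n i (j - 1) - u (i * Δx) ((j - 1 : ℤ) * Δy) (n * Δt))| ≤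
          (1/4 + Δt / (2 * Δy) * b n i j) * E := by
        rw [abs_mul, abs_of_nonneg hc4]
        exact mul_le_mul_of_nonneg_left (IH i (j - 1)) hc4
      have b5 : |Δt * c n i j *
          (U n (i - m₀) (j - q₀) - u ((i - m₀ : ℤ) * Δx) ((j - q₀ : ℤ) * Δy) (n * Δt))| ≤
          Δt * C * E := by
        rw [abs_mul, abs_mul, abs_of_pos hΔt]
        gcongr
        · exact hc n i j
        · exact IH (i - m₀) (j - q₀)
      have b6 : |Δt * T n i j| ≤ Δt * T_max := by
        rw [abs_mul, abs_of_pos hΔt]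
        exact mul_le_mul_of_nonneg_left (hTmax n i j) hΔt.le
      have hsum : (1/4 - Δt / (2 * Δx) * a n i j) * E
          + (1/4 + Δt / (2 * Δx) * a n i j) * E
          + (1/4 - Δt / (2 * Δy) * b n i j) * E
          + (1/4 + Δt / (2 * Δy) * b n i j) * E = E := by ring
      have habs : |U (n + 1) i j - u (i * Δx) (j * Δy) ((n + 1 : ℕ) * Δt)| ≤
          E + Δt * C * E + Δt * T_max := by
        rw [heq]
        calc |_ - Δt * T n i j| ≤
            |(1/4 - Δt / (2 * Δx) * a n i j) *
              (U n (i + 1) j - u ((i + 1 : ℤ) * Δx) (j * Δy) (n * Δt))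
            + (1/4 + Δt / (2 * Δx) * a n i j) *
              (U n (i - 1) j - u ((i - 1 : ℤ) * Δx) (j * Δy) (n * Δt))
            + (1/4 - Δt / (2 * Δy) * b n i j) *
              (U n i (j + 1) - u (i * Δx) ((j + 1 : ℤ) * Δy) (n * Δt))
            + (1/4 + Δt / (2 * Δy) * b n i j) *
              (U n i (j - 1) - u (i * Δx) ((j - 1 : ℤ) * Δy) (n * Δt))
            + Δt * c n i j *
              (U n (i - m₀) (j - q₀) - u ((i - m₀ : ℤ) * Δx) ((j - q₀ : ℤ) * Δy) (n * Δt))|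
            + |Δt * T n i j| := abs_sub _ _
          _ ≤ E + Δt * C * E + Δt * T_max := by
            have := abs_add_le
              ((1/4 - Δt / (2 * Δx) * a n i j) *
                (U n (i + 1) j - u ((i + 1 : ℤ) * Δx) (j * Δy) (n * Δt))
              + (1/4 + Δt / (2 * Δx) * a n i j) *
                (U n (i - 1) j - u ((i - 1 : ℤ) * Δx) (j * Δy) (n * Δt))
              + (1/4 - Δt / (2 * Δy) * b n i j) *
                (U n i (j + 1) - u (i * Δx) ((j + 1 : ℤ) * Δy) (n * Δt))
              + (1/4 + Δt / (2 * Δy) * b n i j) *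
                (U n i (j - 1) - u (i * Δx) ((j - 1 : ℤ) * Δy) (n * Δt)))
              (Δt * c n i j *
                (U n (i - m₀) (j - q₀) - u ((i - m₀ : ℤ) * Δx) ((j - q₀ : ℤ) * Δy) (n * Δt)))
            have h2 := abs_add_le
              ((1/4 - Δt / (2 * Δx) * a n i j) *
                (U n (i + 1) j - u ((i + 1 : ℤ) * Δx) (j * Δy) (n * Δt))
              + (1/4 + Δt / (2 * Δx) * a n i j) *
                (U n (i - 1) j - u ((i - 1 : ℤ) * Δx) (j * Δy) (n * Δt))
              + (1/4 - Δt / (2 * Δy) * b n i j) *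
                (U n i (j + 1) - u (i * Δx) ((j + 1 : ℤ) * Δy) (n * Δt)))
              ((1/4 + Δt / (2 * Δy) * b n i j) *
                (U n i (j - 1) - u (i * Δx) ((j - 1 : ℤ) * Δy) (n * Δt)))
            have h3 := abs_add_le
              ((1/4 - Δt / (2 * Δx) * a n i j) *
                (U n (i + 1) j - u ((i + 1 : ℤ) * Δx) (j * Δy) (n * Δt))
              + (1/4 + Δt / (2 * Δx) * a n i j) *
                (U n (i - 1) j - u ((i - 1 : ℤ) * Δx) (j * Δy) (n * Δt)))
              ((1/4 - Δt / (2 * Δy) * b n i j) *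
                (U n i (j + 1) - u (i * Δx) ((j + 1 : ℤ) * Δy) (n * Δt)))
            have h4 := abs_add_le
              ((1/4 - Δt / (2 * Δx) * a n i j) *
                (U n (i + 1) j - u ((i + 1 : ℤ) * Δx) (j * Δy) (n * Δt)))
              ((1/4 + Δt / (2 * Δx) * a n i j) *
                (U n (i - 1) j - u ((i - 1 : ℤ) * Δx) (j * Δy) (n * Δt)))
            linarith
      have hpow1 : (1:ℝ) ≤ (1 + C * Δt) ^ (n + 1) :=
        one_le_pow₀ (by nlinarith)
      have hid : ((n : ℝ) + 1) * Δt * T_max * (1 + C * Δt) ^ (n + 1)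
          = (E + Δt * C * E) + Δt * T_max * (1 + C * Δt) ^ (n + 1) := by
        rw [hEdef]; ring
      have hlast : Δt * T_max ≤ Δt * T_max * (1 + C * Δt) ^ (n + 1) :=
        le_mul_of_one_le_right (by positivity) hpow1
      calc |U (n + 1) i j - u (i * Δx) (j * Δy) ((n + 1 : ℕ) * Δt)|
          ≤ E + Δt * C * E + Δt * T_max := habs
        _ ≤ ((n : ℕ) + 1 : ℕ) * Δt * T_max * (1 + C * Δt) ^ (n + 1) := by
            push_cast
            linarith
  intro n i j
  refine ⟨key n i j, ?_⟩
  have h1 : (1 + C * Δt) ^ n ≤ Real.exp (C * n * Δt) := by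
    have := Real.add_one_le_exp (C * Δt)
    calc (1 + C * Δt) ^ n ≤ (Real.exp (C * Δt)) ^ n := by
          apply pow_le_pow_left₀ hbase
          linarith
      _ = Real.exp (C * n * Δt) := by
          rw [← Real.exp_nat_mul]
          ring_nf
  have : (0:ℝ) ≤ (n : ℝ) * Δt * T_max := by positivity
  exact mul_le_mul_of_nonneg_left h1 this
end
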